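/- arXiv:1408.2842 — 9 statements merged into one kernel-verified Lean document; each statement's English description precedes it below -/
import Mathlib

section
/- Let M be a monoid and c ∈ M. On the set cM ∩ Mc, the operation ∘ defined by (xc) ∘ (cy) = xcy is well-defined (i.e., if x'c = xc and cy' = cy then x'cy' = xcy) and associative, and c is a neutral element for ∘. Hence M_c = (cM ∩ Mc, ∘, c) is a monoid. -/
variable {M : Type*} [Monoid M]

/-- The underlying set `cM ∩ Mc` of the local divisor of `M` at `c`. -/
def LD (M : Type*) [Monoid M] (c : M) : Set M :=
  {z | (∃ y, z = c * y) ∧ (∃ x, z = x * c)}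

namespace LD

variable {c : M}

/-- The multiplication `(xc) ∘ (cy) = xcy` of the local divisor at `c`,
defined via a choice of `x` with `z₁ = x * c`. -/
noncomputable def mul (z₁ z₂ : LD M c) : LD M c := by
  refine ⟨z₁.2.2.choose * (z₂ : M), ?_, ?_⟩
  · obtain ⟨y₁, hy₁⟩ := z₁.2.1
    obtain ⟨y₂, hy₂⟩ := z₂.2.1
    refine ⟨y₁ * y₂, ?_⟩
    calc z₁.2.2.choose * (z₂ : M) = z₁.2.2.choose * (c * y₂) := by rw [← hy₂]
      _ = z₁.2.2.choose * c * y₂ := (mul_assoc _ _ _).symm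
      _ = (z₁ : M) * y₂ := by rw [← z₁.2.2.choose_spec]
      _ = c * y₁ * y₂ := by rw [hy₁]
      _ = c * (y₁ * y₂) := mul_assoc _ _ _
  · obtain ⟨x₂, hx₂⟩ := z₂.2.2
    exact ⟨z₁.2.2.choose * x₂, by rw [hx₂, mul_assoc]⟩

noncomputable instance : Mul (LD M c) := ⟨mul⟩

instance : One (LD M c) := ⟨⟨c, ⟨1, (mul_one c).symm⟩, ⟨1, (one_mul c).symm⟩⟩⟩

end LD

/-- On `cM ∩ Mc`, the operation `(xc) ∘ (cy) = xcy` is well defined, associative, and has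
`c` as a neutral element; hence `M_c = (cM ∩ Mc, ∘, c)` is a monoid. -/
theorem localDivisor_isMonoid (c : M) :
    -- well-definedness of `(xc) ∘ (cy) = xcy` on the underlying elements of `M`:
    (∀ x x' y y' : M, x * c = x' * c → c * y = c * y' → x * c * y = x' * c * y') ∧
    -- the operation `∘` indeed satisfies `(xc) ∘ (cy) = xcy`:
    (∀ z₁ z₂ : LD M c, ∀ x y : M, (z₁ : M) = x * c → (z₂ : M) = c * y →
      ((z₁ * z₂ : LD M c) : M) = x * c * y) ∧
    -- `∘` is associative:
    (∀ z₁ z₂ z₃ : LD M c, z₁ * z₂ * z₃ = z₁ * (z₂ * z₃)) ∧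
    -- `c` is a neutral element for `∘`:
    (((1 : LD M c) : M) = c ∧ ∀ z : LD M c, 1 * z = z ∧ z * 1 = z) := by
  have wd : ∀ x x' y y' : M, x * c = x' * c → c * y = c * y' → x * c * y = x' * c * y' := by
    intro x x' y y' h1 h2
    calc x * c * y = x * (c * y) := mul_assoc _ _ _
      _ = x * (c * y') := by rw [h2]
      _ = x * c * y' := (mul_assoc _ _ _).symm
      _ = x' * c * y' := by rw [h1]
  have key : ∀ z₁ z₂ : LD M c, ∀ x y : M, (z₁ : M) = x * c → (z₂ : M) = c * y →
      ((z₁ * z₂ : LD M c) : M) = x * c * y := by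
    intro z₁ z₂ x y hx hy
    show z₁.2.2.choose * (z₂ : M) = x * c * y
    rw [hy, ← mul_assoc]
    exact wd _ _ _ _ (z₁.2.2.choose_spec.symm.trans hx) rfl
  refine ⟨wd, key, ?_, rfl, ?_⟩
  · intro z₁ z₂ z₃
    obtain ⟨⟨y₁, hy₁⟩, x₁, hx₁⟩ := z₁.2
    obtain ⟨⟨y₂, hy₂⟩, x₂, hx₂⟩ := z₂.2
    obtain ⟨⟨y₃, hy₃⟩, x₃, hx₃⟩ := z₃.2
    have h12 : ((z₁ * z₂ : LD M c) : M) = x₁ * x₂ * c := by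
      rw [key z₁ z₂ x₁ y₂ hx₁ hy₂, mul_assoc, ← hy₂, hx₂, ← mul_assoc]
    have h23 : ((z₂ * z₃ : LD M c) : M) = c * (y₂ * y₃) := by
      rw [key z₂ z₃ x₂ y₃ hx₂ hy₃, ← mul_assoc, ← hx₂, hy₂, mul_assoc]
    apply Subtype.ext
    rw [key _ z₃ (x₁ * x₂) y₃ h12 hy₃, key z₁ _ x₁ (y₂ * y₃) hx₁ h23]
    calc x₁ * x₂ * c * y₃ = x₁ * (x₂ * c * y₃) := by rw [mul_assoc, mul_assoc, mul_assoc]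
      _ = x₁ * (c * y₂ * y₃) := by rw [← hx₂, hy₂]
      _ = x₁ * c * (y₂ * y₃) := by rw [mul_assoc, ← mul_assoc]
  · intro z
    obtain ⟨⟨y, hy⟩, x, hx⟩ := z.2
    constructor
    · exact Subtype.ext <| by rw [key 1 z 1 y (one_mul c).symm hy, one_mul, ← hy]
    · exact Subtype.ext <| by rw [key z 1 x 1 hx (mul_one c).symm, mul_one, ← hx]
end

section
/- Let M be a monoid and c ∈ M. Then M' = {x ∈ M : cx ∈ Mc} is a submonoid of M, and the map M' → M_c sending x to cx is a surjective monoid homomorphism from M' onto the local divisor M_c = (cM ∩ Mc, ∘, c). In particular, M_c is a divisor (a homomorphic image of a submonoid) of M. -/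
variable {M : Type*} [Monoid M]

namespace LD

variable {c : M}

@[simp] theorem one_val : ((1 : LD M c) : M) = c := rfl

/-- The multiplication of the local divisor is well defined:
if `z₁ = x * c` then `z₁ ∘ z₂ = x * z₂`. -/
theorem mul_val (z₁ z₂ : LD M c) (x : M) (hx : (z₁ : M) = x * c) :
    ((z₁ * z₂ : LD M c) : M) = x * (z₂ : M) := by
  show z₁.2.2.choose * (z₂ : M) = x * (z₂ : M)
  obtain ⟨y₂, hy₂⟩ := z₂.2.1
  calc z₁.2.2.choose * (z₂ : M) = z₁.2.2.choose * (c * y₂) := by rw [← hy₂]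
    _ = z₁.2.2.choose * c * y₂ := (mul_assoc _ _ _).symm
    _ = x * c * y₂ := by rw [← z₁.2.2.choose_spec, hx]
    _ = x * (c * y₂) := mul_assoc _ _ _
    _ = x * (z₂ : M) := by rw [← hy₂]

/-- The local divisor `M_c = (cM ∩ Mc, ∘, c)` of the monoid `M` at `c`. -/
noncomputable instance monoid : Monoid (LD M c) where
  mul_assoc a b d := by
    obtain ⟨xa, hxa⟩ := a.2.2
    have hab : ((a * b : LD M c) : M) = xa * (b : M) := mul_val a b xa hxa
    obtain ⟨xb, hxb⟩ := b.2.2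
    have hab' : ((a * b : LD M c) : M) = (xa * xb) * c := by rw [hab, hxb, mul_assoc]
    apply Subtype.ext
    rw [mul_val (a * b) d (xa * xb) hab', mul_val a (b * d) xa hxa,
      mul_val b d xb hxb, mul_assoc]
  one_mul a := Subtype.ext <| by
    rw [mul_val 1 a 1 (one_mul c).symm, one_mul]
  mul_one a := Subtype.ext <| by
    obtain ⟨xa, hxa⟩ := a.2.2
    rw [mul_val a 1 xa hxa, one_val, ← hxa]

end LD

/-- The submonoid `M' = {x ∈ M : cx ∈ Mc}` of `M`. -/
def LDdom (M : Type*) [Monoid M] (c : M) : Submonoid M where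
  carrier := {x | ∃ y, c * x = y * c}
  one_mem' := ⟨1, by rw [mul_one, one_mul]⟩
  mul_mem' := by
    rintro a b ⟨ya, hya⟩ ⟨yb, hyb⟩
    exact ⟨ya * yb, by rw [← mul_assoc, hya, mul_assoc, hyb, ← mul_assoc]⟩

/-- Auxiliary map `x ↦ cx` from `LDdom M c` to `LD M c`. -/
def LDmap (c : M) (x : LDdom M c) : LD M c :=
  ⟨c * (x : M), ⟨x, rfl⟩, ⟨x.2.choose, x.2.choose_spec⟩⟩

/-- `M' = {x ∈ M : cx ∈ Mc}` is a submonoid of `M` (witnessed by the submonoid `LDdom M c`),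
and `x ↦ cx` is a surjective monoid homomorphism from `M'` onto the local divisor
`M_c = (cM ∩ Mc, ∘, c)`.  In particular `M_c` is a divisor of `M`. -/
theorem localDivisor_divides (c : M) :
    ((1 : M) ∈ {x : M | ∃ y, c * x = y * c}) ∧
    (∀ a b : M, a ∈ {x : M | ∃ y, c * x = y * c} → b ∈ {x : M | ∃ y, c * x = y * c} →
      a * b ∈ {x : M | ∃ y, c * x = y * c}) ∧
    ∃ f : LDdom M c →* LD M c,
      (∀ x : LDdom M c, ((f x : LD M c) : M) = c * (x : M)) ∧ Function.Surjective f := by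
  refine ⟨⟨1, by rw [mul_one, one_mul]⟩, ?_, ?_⟩
  · rintro a b ⟨ya, hya⟩ ⟨yb, hyb⟩
    exact ⟨ya * yb, by rw [← mul_assoc, hya, mul_assoc, hyb, ← mul_assoc]⟩
  · refine ⟨⟨⟨LDmap c, ?_⟩, ?_⟩, fun x => rfl, ?_⟩
    · exact Subtype.ext (by simp [LDmap])
    · intro a b
      apply Subtype.ext
      obtain ⟨ya, hya⟩ := a.2
      have : ((LDmap c a * LDmap c b : LD M c) : M)
          = ya * (c * (b : M)) := LD.mul_val _ _ ya hya
      show (LDmap c (a * b) : M) = _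
      rw [this, ← mul_assoc, ← hya]
      simp [LDmap, mul_assoc]
    · rintro ⟨z, ⟨y, hy⟩, ⟨x, hx⟩⟩
      exact ⟨⟨y, x, by rw [← hy, hx]⟩, Subtype.ext (by simp [LDmap, ← hy])⟩
end

section
/- Let M be a finite aperiodic monoid and let c ∈ M with c ≠ 1. Then the local divisor M_c is aperiodic. -/
variable {M : Type*} [Monoid M]

/-- A monoid `M` is aperiodic if for every `x ∈ M` there is an `n ∈ ℕ`
with `x ^ n = x ^ (n + 1)`. -/
def Aperiodic (N : Type*) [Monoid N] : Prop :=
  ∀ x : N, ∃ n : ℕ, x ^ n = x ^ (n + 1)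

/-- If `M` is a finite aperiodic monoid and `c ≠ 1`, then the local divisor
`M_c = (cM ∩ Mc, ∘, c)` is aperiodic. -/
theorem localDivisor_aperiodic [Finite M] (hM : Aperiodic M) (c : M) (hc : c ≠ 1) :
    Aperiodic (LD M c) := by
  intro z
  obtain ⟨⟨y, hy⟩, ⟨x, hx⟩⟩ := z.2
  have key : ∀ n, ((z ^ n : LD M c) : M) = c * y ^ n := by
    intro n
    induction n with
    | zero => simp
    | succ n ih =>
      rw [pow_succ', LD.mul_val z (z ^ n) x hx, ih, ← mul_assoc, ← hx, hy,
        mul_assoc, ← pow_succ']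
  obtain ⟨n, hn⟩ := hM y
  exact ⟨n, Subtype.ext (by rw [key, key, hn])⟩
end

section
/- Let M be a finite aperiodic monoid and let c ∈ M with c ≠ 1. Then 1 ∉ cM ∩ Mc, and hence the cardinality of the local divisor M_c is strictly smaller than the cardinality of M: |M_c| < |M|. -/
variable {M : Type*} [Monoid M]

/-- If `M` is a finite aperiodic monoid and `c ≠ 1`, then `1 ∉ cM ∩ Mc`, and hence the
local divisor `M_c` has strictly fewer elements than `M`: `|M_c| < |M|`. -/
theorem localDivisor_card_lt [Finite M] (hM : Aperiodic M) (c : M) (hc : c ≠ 1) :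
    (1 : M) ∉ LD M c ∧ Nat.card (LD M c) < Nat.card M := by
  have hnot : (1 : M) ∉ LD M c := by
    rintro ⟨⟨y, hy⟩, ⟨x, hx⟩⟩
    obtain ⟨n, hn⟩ := hM c
    -- c is invertible: c * y = 1 and x * c = 1
    have hyc : c * y = 1 := hy.symm
    have hxc : x * c = 1 := hx.symm
    -- hence c^n = c^(n+1) implies c = 1
    have key : ∀ m : ℕ, c ^ m * y ^ m = 1 := by
      intro m
      induction m with
      | zero => simp
      | succ k ih =>
        calc c ^ (k + 1) * y ^ (k + 1) = c * (c ^ k * y ^ k) * y := by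
              rw [pow_succ', pow_succ, mul_assoc, mul_assoc, mul_assoc]
          _ = 1 := by rw [ih, mul_one, hyc]
    have : c = 1 := by
      have h1 : c ^ (n + 1) * y ^ n = c ^ n * y ^ n := by rw [← hn]
      have h2 : c ^ (n + 1) * y ^ n = c * (c ^ n * y ^ n) := by
        rw [pow_succ', mul_assoc]
      rw [key n] at h1 h2
      rw [mul_one] at h2
      rw [← h2, h1]
    exact hc this
  refine ⟨hnot, ?_⟩
  have h1 : Nat.card (LD M c) = (LD M c).ncard := (Nat.card_coe_set_eq _)
  have h2 : Nat.card M = (Set.univ : Set M).ncard := (Set.ncard_univ M).symm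
  rw [h1, h2]
  exact Set.ncard_lt_ncard (Set.ssubset_univ_iff.mpr (fun h => hnot (h ▸ Set.mem_univ 1)))
    Set.finite_univ
end

section
/- Let A be a finite alphabet, let φ : A* → M be a monoid homomorphism, let c ∈ A, let B = A \ {c}, and let φ_c : B* → M be the restriction of φ to B*. Then for every p ∈ M: φ^{-1}(p) = φ_c^{-1}(p) ∪ ⋃_{p = p₁p₂p₃} φ_c^{-1}(p₁) · (φ^{-1}(p₂) ∩ cA* ∩ A*c) · φ_c^{-1}(p₃), where the union is over all factorizations p = p₁p₂p₃ in M, languages over B are viewed as languages over A, and cA* (resp. A*c) denotes the set of words over A beginning (resp. ending) with the letter c. -/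
lemma dropWhile_head_false {α : Type*} (p : α → Bool) (l : List α) (a : α) (t : List α)
    (h : l.dropWhile p = a :: t) : p a = false := by
  induction l with
  | nil => simp at h
  | cons x xs ih =>
    rw [List.dropWhile_cons] at h
    split at h
    · exact ih h
    · cases h; simpa using ‹¬ _ = true›

lemma split_at_c {A : Type*} [DecidableEq A] (c : A) (l : List A) (hc : c ∈ l) :
    ∃ u m v : List A, l = u ++ m ++ v ∧ (∀ a ∈ u, a ≠ c) ∧ (∀ a ∈ v, a ≠ c) ∧
      (∃ t, m = c :: t) ∧ (∃ t, m = t ++ [c]) := by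
  classical
  set P : A → Bool := fun a => a ≠ c with hP
  set u := l.takeWhile P with hu
  set r := l.dropWhile P with hr
  have hl : l = u ++ r := (l.takeWhile_append_dropWhile (p := P)).symm
  have hru : ∀ a ∈ u, a ≠ c := fun a ha => by
    simpa [hP] using List.mem_takeWhile_imp ha
  have hcr : c ∈ r := by
    rcases (List.mem_append.mp (hl ▸ hc)) with h | h
    · exact absurd rfl (hru c h)
    · exact h
  obtain ⟨a, t, hat⟩ := List.exists_cons_of_ne_nil (List.ne_nil_of_mem hcr)
  have hac : a = c := by
    have := dropWhile_head_false P l a t (by rw [← hr, hat])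
    simpa [hP] using this
  set m := (r.reverse.dropWhile P).reverse with hm
  set v := (r.reverse.takeWhile P).reverse with hv
  have hrmv : r = m ++ v := by
    rw [hm, hv, ← List.reverse_append, List.takeWhile_append_dropWhile, List.reverse_reverse]
  have hvne : ∀ x ∈ v, x ≠ c := fun x hx => by
    have : x ∈ r.reverse.takeWhile P := by
      rw [hv] at hx; exact List.mem_reverse.mp hx
    simpa [hP] using List.mem_takeWhile_imp this
  have hcrr : c ∈ r.reverse := List.mem_reverse.mpr hcr
  have hdne : r.reverse.dropWhile P ≠ [] := by
    intro h
    have : r.reverse = r.reverse.takeWhile P := by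
      conv_lhs => rw [← r.reverse.takeWhile_append_dropWhile (p := P), h]
      simp
    exact hvne c (by rw [hv]; exact List.mem_reverse.mpr (this ▸ hcrr)) rfl
  obtain ⟨b, s, hbs⟩ := List.exists_cons_of_ne_nil hdne
  have hbc : b = c := by
    have := dropWhile_head_false P r.reverse b s hbs
    simpa [hP] using this
  have hmend : m = s.reverse ++ [c] := by rw [hm, hbs, hbc]; simp
  have hmne : m ≠ [] := by simp [hmend]
  obtain ⟨x, y, hxy⟩ := List.exists_cons_of_ne_nil hmne
  have hxc : x = c := by
    have : a :: t = x :: (y ++ v) := by rw [← hat, hrmv, hxy]; rfl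
    have hax : a = x := by injection this
    rw [← hax, hac]
  exact ⟨u, m, v, by rw [hl, hrmv, List.append_assoc], hru, hvne, ⟨y, hxc ▸ hxy⟩, ⟨s.reverse, hmend⟩⟩



/-- Concatenation of languages: `K · K' = {uv : u ∈ K, v ∈ K'}`. -/
def Lang.cat {α : Type*} (K K' : Set (FreeMonoid α)) : Set (FreeMonoid α) :=
  {w | ∃ u ∈ K, ∃ v ∈ K', w = u * v}

/-- Let `φ : A* → M` be a monoid homomorphism, `c ∈ A`, `B = A \ {c}`, and let `φ_c` be the
restriction of `φ` to `B*` (so `φ_c⁻¹(q)` is the set of words avoiding `c` that `φ` maps to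
`q`, viewed as a language over `A`).  Then
`φ⁻¹(p) = φ_c⁻¹(p) ∪ ⋃_{p = p₁p₂p₃} φ_c⁻¹(p₁) · (φ⁻¹(p₂) ∩ cA* ∩ A*c) · φ_c⁻¹(p₃)`. -/
theorem preimage_factorization {A M : Type*} [Finite A] [Monoid M]
    (φ : FreeMonoid A →* M) (c : A) (p : M) :
    {w : FreeMonoid A | φ w = p} =
      {w : FreeMonoid A | (∀ a ∈ w, a ≠ c) ∧ φ w = p} ∪
      ⋃ (p₁ : M) (p₂ : M) (p₃ : M) (_ : p₁ * p₂ * p₃ = p),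
        Lang.cat
          (Lang.cat {w : FreeMonoid A | (∀ a ∈ w, a ≠ c) ∧ φ w = p₁}
            ({w : FreeMonoid A | φ w = p₂} ∩ {w | ∃ u, w = FreeMonoid.of c * u} ∩
              {w | ∃ u, w = u * FreeMonoid.of c}))
          {w : FreeMonoid A | (∀ a ∈ w, a ≠ c) ∧ φ w = p₃} := by
  classical
  ext w
  simp only [Set.mem_setOf_eq, Set.mem_union, Set.mem_iUnion]
  constructor
  · intro hw
    by_cases h : ∀ a ∈ w, a ≠ c
    · exact Or.inl ⟨h, hw⟩
    · right
      push_neg at h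
      obtain ⟨a, ha, hac⟩ := h
      have hcw : c ∈ w.toList := by
        have : a ∈ w.toList := ha
        rwa [hac] at this
      obtain ⟨u, m, v, heq, hu, hv, ⟨t1, ht1⟩, ⟨t2, ht2⟩⟩ := split_at_c c w.toList hcw
      have hw' : w = FreeMonoid.ofList u * FreeMonoid.ofList m * FreeMonoid.ofList v := by
        have : FreeMonoid.ofList w.toList = FreeMonoid.ofList (u ++ m ++ v) :=
          congrArg _ heq
        exact this
      refine ⟨φ (.ofList u), φ (.ofList m), φ (.ofList v), ?_, ?_⟩
      · rw [← map_mul, ← map_mul, ← hw', hw]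
      · refine ⟨FreeMonoid.ofList u * FreeMonoid.ofList m,
          ⟨FreeMonoid.ofList u, ⟨hu, rfl⟩, FreeMonoid.ofList m,
            ⟨⟨rfl, FreeMonoid.ofList t1, by rw [ht1]; rfl⟩,
              FreeMonoid.ofList t2, by rw [ht2]; rfl⟩, rfl⟩,
          FreeMonoid.ofList v, ⟨hv, rfl⟩, hw'⟩
  · rintro (⟨-, h⟩ | ⟨p₁, p₂, p₃, hp, x, ⟨x1, ⟨-, h1⟩, x2, ⟨⟨h2, -⟩, -⟩, rfl⟩, y, ⟨-, h3⟩, rfl⟩)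
    · exact h
    · rw [map_mul, map_mul, h1, h2, h3, hp]
end

section
/- Let φ : A* → M be a monoid homomorphism, c ∈ A, B = A \ {c}, and φ_c : B* → M the restriction of φ. Let T = φ_c(B*) ⊆ M be viewed as a finite alphabet, let σ : (B*c)* → T* be the substitution mapping v₁c v₂c ⋯ v_k c (k ≥ 0, v_i ∈ B*) to φ_c(v₁)φ_c(v₂)⋯φ_c(v_k), and let ψ : T* → M_{φ(c)} be the monoid homomorphism into the local divisor of M at φ(c) determined by ψ(φ_c(v)) = φ(cvc) on letters. Then for every word w = v₁c ⋯ v_k c with k ≥ 0 and v_i ∈ B*, one has ψ(σ(w)) = φ(cw), where the products on the left are taken with the local divisor multiplication ∘. -/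
variable {M : Type*} [Monoid M]

/-- The image `T = φ_c(B*)` of the set of words avoiding the letter `c` under `φ`,
used as a finite alphabet. -/
def Tset {A M : Type*} [Monoid M] (φ : FreeMonoid A →* M) (c : A) : Set M :=
  {m | ∃ v : FreeMonoid A, (∀ a ∈ v, a ≠ c) ∧ φ v = m}

/-- Let `φ : A* → M` be a homomorphism, `c ∈ A`, `B = A \ {c}`, `φ_c` the restriction of `φ`
to `B*`, and `T = φ_c(B*)` viewed as an alphabet.  Let `ψ : T* → M_{φ(c)}` be the
homomorphism into the local divisor of `M` at `φ(c)` with `ψ(φ_c(v)) = φ(cvc)` on letters.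
Then for every word `w = v₁c ⋯ v_k c` (`k ≥ 0`, `v_i ∈ B*`), with
`σ(w) = φ_c(v₁) ⋯ φ_c(v_k) ∈ T*`, one has `ψ(σ(w)) = φ(cw)`, the products on the left
being taken with the local divisor multiplication `∘`. -/
theorem psi_sigma_eq {A : Type*} [Finite A] (φ : FreeMonoid A →* M) (c : A)
    (ψ : FreeMonoid (Tset φ c) →* LD M (φ (FreeMonoid.of c)))
    (hψ : ∀ t : Tset φ c,
      ((ψ (FreeMonoid.of t) : LD M (φ (FreeMonoid.of c))) : M) =
        φ (FreeMonoid.of c) * (t : M) * φ (FreeMonoid.of c))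
    (L : List {v : FreeMonoid A // ∀ a ∈ v, a ≠ c}) :
    ((ψ (FreeMonoid.ofList
        (L.map fun v => (⟨φ v.val, v.val, v.2, rfl⟩ : Tset φ c))) :
          LD M (φ (FreeMonoid.of c))) : M) =
      φ (FreeMonoid.of c * (L.map fun v => v.val * FreeMonoid.of c).prod) := by
  induction L with
  | nil => simp
  | cons v L ih =>
      have hmap : (FreeMonoid.ofList
          ((v :: L).map fun v => (⟨φ v.val, v.val, v.2, rfl⟩ : Tset φ c))) =
          FreeMonoid.of (⟨φ v.val, v.val, v.2, rfl⟩ : Tset φ c) *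
            FreeMonoid.ofList (L.map fun v => (⟨φ v.val, v.val, v.2, rfl⟩ : Tset φ c)) := rfl
      rw [hmap, map_mul]
      have hx : ((ψ (FreeMonoid.of (⟨φ v.val, v.val, v.2, rfl⟩ : Tset φ c)) :
          LD M (φ (FreeMonoid.of c))) : M) =
          (φ (FreeMonoid.of c) * φ v.val) * φ (FreeMonoid.of c) := by
        rw [hψ]
      rw [LD.mul_val _ _ _ hx, ih]
      simp [mul_assoc]
end

section
/- Let φ : A* → M be a monoid homomorphism, c ∈ A, B = A \ {c}, φ_c : B* → M the restriction of φ, T = φ_c(B*) viewed as a finite alphabet, σ : (B*c)* → T* the substitution with σ(v₁c⋯v_k c) = φ_c(v₁)⋯φ_c(v_k), and ψ : T* → M_{φ(c)} the homomorphism into the local divisor of M at φ(c) with ψ(φ_c(v)) = φ(cvc) on letters. Then for every p ∈ φ(c)M ∩ Mφ(c): φ^{-1}(p) ∩ cA* ∩ A*c = c · σ^{-1}(ψ^{-1}(p)), where c · K denotes {cw : w ∈ K} and cA* (resp. A*c) is the set of words beginning (resp. ending) with c. -/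
variable {M : Type*} [Monoid M]

section Aux

variable {A : Type*}

private lemma psi_val (φ : FreeMonoid A →* M) (c : A)
    (ψ : FreeMonoid (Tset φ c) →* LD M (φ (FreeMonoid.of c)))
    (hψ : ∀ t : Tset φ c,
      ((ψ (FreeMonoid.of t) : LD M (φ (FreeMonoid.of c))) : M) =
        φ (FreeMonoid.of c) * (t : M) * φ (FreeMonoid.of c))
    (L : List (Tset φ c)) :
    ((ψ (FreeMonoid.ofList L) : LD M (φ (FreeMonoid.of c))) : M) =
      φ (FreeMonoid.of c) *
        (L.map fun t => t.val * φ (FreeMonoid.of c)).prod := by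
  induction L with
  | nil => simp [FreeMonoid.ofList_nil]
  | cons t L ih =>
    rw [FreeMonoid.ofList_cons, map_mul,
      LD.mul_val _ _ (φ (FreeMonoid.of c) * (t : M)) (hψ t), ih]
    simp [mul_assoc]

private lemma phi_psi (φ : FreeMonoid A →* M) (c : A)
    (ψ : FreeMonoid (Tset φ c) →* LD M (φ (FreeMonoid.of c)))
    (hψ : ∀ t : Tset φ c,
      ((ψ (FreeMonoid.of t) : LD M (φ (FreeMonoid.of c))) : M) =
        φ (FreeMonoid.of c) * (t : M) * φ (FreeMonoid.of c))
    (L : List {v : FreeMonoid A // ∀ a ∈ v, a ≠ c}) :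
    ((ψ (FreeMonoid.ofList
        (L.map fun v => (⟨φ v.val, v.val, v.2, rfl⟩ : Tset φ c)))
        : LD M (φ (FreeMonoid.of c))) : M) =
      φ (FreeMonoid.of c * (L.map fun v => v.val * FreeMonoid.of c).prod) := by
  rw [psi_val φ c ψ hψ, map_mul, map_list_prod, List.map_map, List.map_map]
  congr 1
  exact congrArg List.prod (List.map_congr_left fun v _ => by simp [map_mul])

private lemma factor (c : A) (u : List A) :
    ∃ L : List {v : FreeMonoid A // ∀ a ∈ v, a ≠ c},
      FreeMonoid.ofList (u ++ [c]) =
        (L.map fun v => v.val * FreeMonoid.of c).prod ∧ L ≠ [] := by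
  induction u with
  | nil =>
    refine ⟨[⟨1, fun a ha => absurd ha FreeMonoid.notMem_one⟩], ?_, by simp⟩
    simp [FreeMonoid.ofList_singleton]
  | cons a u ih =>
    obtain ⟨L, hL, hne⟩ := ih
    by_cases h : a = c
    · subst h
      refine ⟨⟨1, fun b hb => absurd hb FreeMonoid.notMem_one⟩ :: L, ?_, by simp⟩
      rw [List.cons_append, FreeMonoid.ofList_cons, hL]
      simp
    · match L, hne with
      | v :: L', _ =>
        refine ⟨⟨FreeMonoid.of a * v.val, fun b hb => ?_⟩ :: L', ?_, by simp⟩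
        · rcases FreeMonoid.mem_mul.mp hb with h1 | h2
          · exact (FreeMonoid.mem_of.mp h1) ▸ h
          · exact v.2 b h2
        · rw [List.cons_append, FreeMonoid.ofList_cons, hL]
          simp [mul_assoc]

private lemma ends (c : A) (L : List {v : FreeMonoid A // ∀ a ∈ v, a ≠ c}) :
    (L.map fun v => v.val * FreeMonoid.of c).prod = 1 ∨
      ∃ u, (L.map fun v => v.val * FreeMonoid.of c).prod = u * FreeMonoid.of c := by
  induction L with
  | nil => exact Or.inl rfl
  | cons v L ih =>
    right
    rcases ih with h | ⟨u, hu⟩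
    · exact ⟨v.val, by rw [List.map_cons, List.prod_cons, h, mul_one]⟩
    · exact ⟨v.val * FreeMonoid.of c * u, by rw [List.map_cons, List.prod_cons, hu]; simp [mul_assoc]⟩

end Aux

/-- Let `φ : A* → M`, `c ∈ A`, `B = A \ {c}`, `T = φ_c(B*)`, let
`σ : (B*c)* → T*` be the block substitution `σ(v₁c⋯v_kc) = φ_c(v₁)⋯φ_c(v_k)`, and let
`ψ : T* → M_{φ(c)}` be the homomorphism into the local divisor at `φ(c)` with
`ψ(φ_c(v)) = φ(cvc)` on letters.  Then for every `p ∈ φ(c)M ∩ Mφ(c)`: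
`φ⁻¹(p) ∩ cA* ∩ A*c = c · σ⁻¹(ψ⁻¹(p))`. -/
theorem preimage_eq_c_mul_sigmaInv_psiInv {A : Type*} [Finite A]
    (φ : FreeMonoid A →* M) (c : A)
    (ψ : FreeMonoid (Tset φ c) →* LD M (φ (FreeMonoid.of c)))
    (hψ : ∀ t : Tset φ c,
      ((ψ (FreeMonoid.of t) : LD M (φ (FreeMonoid.of c))) : M) =
        φ (FreeMonoid.of c) * (t : M) * φ (FreeMonoid.of c))
    (p : M) (hp : p ∈ LD M (φ (FreeMonoid.of c))) :
    {w : FreeMonoid A | φ w = p} ∩ {w | ∃ u, w = FreeMonoid.of c * u} ∩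
        {w | ∃ u, w = u * FreeMonoid.of c} =
      {w : FreeMonoid A | ∃ w' : FreeMonoid A,
        w = FreeMonoid.of c * w' ∧
        ∃ L : List {v : FreeMonoid A // ∀ a ∈ v, a ≠ c},
          w' = (L.map fun v => v.val * FreeMonoid.of c).prod ∧
          ψ (FreeMonoid.ofList
              (L.map fun v => (⟨φ v.val, v.val, v.2, rfl⟩ : Tset φ c))) = ⟨p, hp⟩} := by
  ext w
  constructor
  · rintro ⟨⟨hφ, u, hu⟩, u', hu'⟩
    rcases List.eq_nil_or_concat (FreeMonoid.toList u) with h0 | ⟨l, a, hl⟩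
    · have hu1 : u = 1 := FreeMonoid.toList.injective (by simpa using h0)
      refine ⟨1, by rw [hu, hu1], [], by simp, ?_⟩
      apply Subtype.ext
      have h := phi_psi φ c ψ hψ []
      simp only [List.map_nil, List.prod_nil, mul_one] at h ⊢
      rw [h, ← hφ, hu, hu1, mul_one]
    · have hac : a = c := by
        have h1 : FreeMonoid.toList w = FreeMonoid.toList u' ++ [c] := by
          rw [hu']; rfl
        have h2 : FreeMonoid.toList w = (c :: l) ++ [a] := by
          rw [hu]
          show c :: FreeMonoid.toList u = (c :: l) ++ [a]
          rw [hl, List.concat_eq_append]; rfl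
        have h3 : FreeMonoid.toList u' ++ [c] = (c :: l) ++ [a] := h1 ▸ h2
        have := (List.append_inj' h3 rfl).2
        simpa using this.symm
      subst hac
      obtain ⟨L, hL, -⟩ := factor a l
      have huL : u = (L.map fun v => v.val * FreeMonoid.of a).prod := by
        rw [← hL]
        exact FreeMonoid.toList.injective (by rw [hl, List.concat_eq_append]; rfl)
      refine ⟨u, hu, L, huL, ?_⟩
      apply Subtype.ext
      rw [phi_psi φ a ψ hψ L, ← huL, ← hu, hφ]
  · rintro ⟨w', hw, L, hL, hψL⟩
    have hval : φ w = p := by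
      have := phi_psi φ c ψ hψ L
      rw [hψL] at this
      rw [hw, hL, ← this]
    refine ⟨⟨hval, w', hw⟩, ?_⟩
    rcases ends c L with h | ⟨u, hu⟩
    · exact ⟨1, by rw [hw, hL, h, mul_one, one_mul]⟩
    · exact ⟨FreeMonoid.of c * u, by rw [hw, hL, hu, mul_assoc]⟩
end

section
/- For every star-free language L ∈ SF(A*) over a finite alphabet A, there exists a natural number n such that for all words p, q, u ∈ A*: p u^n q ∈ L if and only if p u^{n+1} q ∈ L. -/
/-- The class `SF(A*)` of star-free languages over the alphabet `A`: the smallest class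
containing `A*` and `{a}` for each letter `a`, closed under union, set difference and
concatenation. -/
inductive SF {A : Type*} : Set (FreeMonoid A) → Prop
  | full : SF Set.univ
  | letter (a : A) : SF {FreeMonoid.of a}
  | union {K K'} : SF K → SF K' → SF (K ∪ K')
  | diff {K K'} : SF K → SF K' → SF (K \ K')
  | concat {K K'} : SF K → SF K' → SF (Lang.cat K K')

namespace SFaux

variable {A : Type*}

/-- The aperiodicity property at index `n`. -/
def P (L : Set (FreeMonoid A)) (n : ℕ) : Prop :=
  ∀ p q u : FreeMonoid A, p * u ^ n * q ∈ L ↔ p * u ^ (n + 1) * q ∈ L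

theorem P_succ {L : Set (FreeMonoid A)} {n : ℕ} (h : P L n) : P L (n + 1) := by
  intro p q u
  have e1 : p * u ^ (n + 1) * q = (p * u) * u ^ n * q := by
    rw [pow_succ', ← mul_assoc]
  have e2 : p * u ^ (n + 2) * q = (p * u) * u ^ (n + 1) * q := by
    rw [pow_succ' u (n + 1), ← mul_assoc]
  rw [e1, e2]
  exact h (p * u) q u

theorem P_ge {L : Set (FreeMonoid A)} {n m : ℕ} (h : P L n) (hm : n ≤ m) : P L m := by
  induction m with
  | zero => exact Nat.le_zero.mp hm ▸ h
  | succ k ih =>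
    rcases Nat.lt_or_ge n (k + 1) with h1 | h1
    · exact P_succ (ih (by omega))
    · have : n = k + 1 := by omega
      exact this ▸ h

theorem P_pump {L : Set (FreeMonoid A)} {n : ℕ} (h : P L n) {m k : ℕ} (hm : n ≤ m)
    (hk : n ≤ k) (p q u : FreeMonoid A) : p * u ^ m * q ∈ L ↔ p * u ^ k * q ∈ L := by
  have key : ∀ d m', n ≤ m' → (p * u ^ m' * q ∈ L ↔ p * u ^ (m' + d) * q ∈ L) := by
    intro d
    induction d with
    | zero => intro m' _; rfl
    | succ e ih =>
      intro m' hm'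
      have h2 := P_ge h (show n ≤ m' + e by omega) p q u
      have e2 : m' + e + 1 = m' + (e + 1) := by omega
      rw [e2] at h2
      exact (ih m' hm').trans h2
  rcases Nat.le_total m k with hle | hle
  · obtain ⟨d, rfl⟩ := Nat.le.dest hle
    exact key d m hm
  · obtain ⟨d, rfl⟩ := Nat.le.dest hle
    exact (key d k hk).symm

/-- Splitting of a product in a free monoid. -/
theorem fm_split {x y a b : FreeMonoid A} (h : x * y = a * b) :
    (∃ c, a = x * c ∧ y = c * b) ∨ ∃ c, x = a * c ∧ b = c * y := by
  have h' : x.toList ++ y.toList = a.toList ++ b.toList := by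
    rw [← FreeMonoid.toList_mul, ← FreeMonoid.toList_mul, h]
  rcases List.append_eq_append_iff.mp h' with ⟨c, hc1, hc2⟩ | ⟨c, hc1, hc2⟩
  · left
    refine ⟨FreeMonoid.ofList c, ?_, ?_⟩
    · apply FreeMonoid.toList.injective
      simpa [FreeMonoid.toList_mul] using hc1
    · apply FreeMonoid.toList.injective
      simpa [FreeMonoid.toList_mul] using hc2
  · right
    refine ⟨FreeMonoid.ofList c, ?_, ?_⟩
    · apply FreeMonoid.toList.injective
      simpa [FreeMonoid.toList_mul] using hc1
    · apply FreeMonoid.toList.injective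
      simpa [FreeMonoid.toList_mul] using hc2

theorem splitPow (u q : FreeMonoid A) :
    ∀ (N : ℕ) (c y : FreeMonoid A), c * y = u ^ N * q →
    (∃ i u₁ u₂ j, u = u₁ * u₂ ∧ i + 1 + j = N ∧ c = u ^ i * u₁ ∧ y = u₂ * u ^ j * q) ∨
    (∃ q₁ q₂, q = q₁ * q₂ ∧ c = u ^ N * q₁ ∧ y = q₂) := by
  intro N
  induction N with
  | zero =>
    intro c y h
    right
    exact ⟨c, y, by simpa using h.symm, by simp, rfl⟩
  | succ N ih =>
    intro c y h
    have h' : c * y = u * (u ^ N * q) := by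
      rw [h, pow_succ', mul_assoc]
    rcases fm_split h' with ⟨d, hd1, hd2⟩ | ⟨d, hd1, hd2⟩
    · -- u = c * d, y = d * (u^N * q)
      left
      exact ⟨0, c, d, N, hd1, by omega, by simp, by rw [hd2, mul_assoc]⟩
    · -- c = u * d, u^N * q = d * y
      rcases ih d y hd2.symm with ⟨i, u₁, u₂, j, h1, h2, h3, h4⟩ | ⟨q₁, q₂, h1, h2, h3⟩
      · left
        refine ⟨i + 1, u₁, u₂, j, h1, by omega, ?_, h4⟩
        rw [hd1, h3, pow_succ', mul_assoc]
      · right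
        refine ⟨q₁, q₂, h1, ?_, h3⟩
        rw [hd1, h2, pow_succ', mul_assoc]

theorem pow_mid {M : Type*} [Monoid M] {u u₁ u₂ : M} (h : u = u₁ * u₂) (a b : ℕ) :
    u ^ (a + 1 + b) = u ^ a * (u₁ * (u₂ * u ^ b)) := by
  subst h
  rw [pow_add, pow_add, pow_one]
  simp only [mul_assoc]

/-- The concatenation step: pump one copy of `u` into / out of `Lang.cat K K'`. -/
theorem cat_pump {K K' : Set (FreeMonoid A)} {n n' : ℕ} (hK : P K n) (hK' : P K' n')
    {M M' : ℕ} (hM : n + n' + 1 ≤ M) (hM' : n + n' + 1 ≤ M') (hd : M' = M + 1 ∨ M = M' + 1)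
    (p q u : FreeMonoid A) (hmem : p * u ^ M * q ∈ Lang.cat K K') :
    p * u ^ M' * q ∈ Lang.cat K K' := by
  obtain ⟨x, hx, y, hy, hxy⟩ := hmem
  have h' : x * y = p * (u ^ M * q) := by rw [← hxy, mul_assoc]
  rcases fm_split h'.symm with ⟨c, hc1, hc2⟩ | ⟨c, hc1, hc2⟩
  · -- hc1 : x = p * c, hc2 : u^M * q = c * y
    rcases splitPow u q M c y hc2.symm with ⟨i, u₁, u₂, j, h1, h2, h3, h4⟩ |
      ⟨q₁, q₂, h1, h2, h3⟩
    · -- x = p * u^i * u₁, y = u₂ * u^j * q, i + 1 + j = M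
      have hxK : p * u ^ i * u₁ ∈ K := by
        have : x = p * u ^ i * u₁ := by rw [hc1, h3, ← mul_assoc]
        exact this ▸ hx
      have hyK : u₂ * u ^ j * q ∈ K' := h4 ▸ hy
      have key : ∃ i' j', i' + 1 + j' = M' ∧
          ((i' = i ∧ n' ≤ j ∧ n' ≤ j') ∨ (j' = j ∧ n ≤ i ∧ n ≤ i')) := by
        rcases le_or_gt n i with hi | hi
        · rcases hd with rfl | hdd
          · exact ⟨i + 1, j, by omega, Or.inr ⟨rfl, hi, by omega⟩⟩
          · rcases le_or_gt (n + 1) i with hi2 | hi2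
            · exact ⟨i - 1, j, by omega, Or.inr ⟨rfl, hi, by omega⟩⟩
            · exact ⟨i, j - 1, by omega, Or.inl ⟨rfl, by omega, by omega⟩⟩
        · rcases hd with rfl | hdd
          · exact ⟨i, j + 1, by omega, Or.inl ⟨rfl, by omega, by omega⟩⟩
          · exact ⟨i, j - 1, by omega, Or.inl ⟨rfl, by omega, by omega⟩⟩
      obtain ⟨i', j', hsum, hcase⟩ := key
      rcases hcase with ⟨h5, hj1, hj2⟩ | ⟨h5, hi1, hi2⟩
      · -- pump y : exponent j ↦ j'
        have hy2 : u₂ * u ^ j' * q ∈ K' := (P_pump hK' hj1 hj2 u₂ q u).mp hyK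
        refine ⟨x, hx, u₂ * u ^ j' * q, hy2, ?_⟩
        rw [hc1, h3, show M' = i + 1 + j' by omega, pow_mid h1]
        simp only [mul_assoc]
      · -- pump x : exponent i ↦ i'
        have hx2 : p * u ^ i' * u₁ ∈ K := (P_pump hK hi1 hi2 p u₁ u).mp hxK
        refine ⟨p * u ^ i' * u₁, hx2, y, hy, ?_⟩
        rw [h4, show M' = i' + 1 + j by omega, pow_mid h1]
        simp only [mul_assoc]
    · -- x = p * u^M * q₁, y = q₂, q = q₁ * q₂
      have hxK : p * u ^ M * q₁ ∈ K := by
        have : x = p * u ^ M * q₁ := by rw [hc1, h2, ← mul_assoc]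
        exact this ▸ hx
      have hx2 : p * u ^ M' * q₁ ∈ K := (P_pump hK (by omega) (by omega) p q₁ u).mp hxK
      refine ⟨p * u ^ M' * q₁, hx2, y, hy, ?_⟩
      rw [h3, h1]
      simp only [mul_assoc]
  · -- hc1 : p = x * c, hc2 : y = c * (u^M * q)
    have hyK : c * u ^ M * q ∈ K' := by rw [mul_assoc, ← hc2]; exact hy
    have hy2 : c * u ^ M' * q ∈ K' := (P_pump hK' (by omega) (by omega) c q u).mp hyK
    refine ⟨x, hx, c * u ^ M' * q, hy2, ?_⟩
    rw [hc1]
    simp only [mul_assoc]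

theorem length_pow (u : FreeMonoid A) (m : ℕ) : (u ^ m).length = m * u.length := by
  induction m with
  | zero => simp [FreeMonoid.length_one]
  | succ k ih => rw [pow_succ, FreeMonoid.length_mul, ih]; ring

end SFaux


/-- For every star-free language `L ∈ SF(A*)` there is an `n ∈ ℕ` such that for all
words `p, q, u ∈ A*`:  `p uⁿ q ∈ L ↔ p u^{n+1} q ∈ L`. -/
theorem starfree_aperiodicity {A : Type*} [Finite A] (L : Set (FreeMonoid A))
    (hL : SF L) :
    ∃ n : ℕ, ∀ p q u : FreeMonoid A, p * u ^ n * q ∈ L ↔ p * u ^ (n + 1) * q ∈ L := by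
  induction hL with
  | full => exact ⟨0, fun p q u => by simp⟩
  | letter a =>
    refine ⟨2, fun p q u => ?_⟩
    by_cases hu : u = 1
    · subst hu; simp
    · have hlen : 1 ≤ u.length := by
        rcases Nat.eq_zero_or_pos u.length with h | h
        · exact absurd (FreeMonoid.length_eq_zero.mp h) hu
        · exact h
      have key : ∀ m : ℕ, 2 ≤ m → p * u ^ m * q ∉ ({FreeMonoid.of a} : Set (FreeMonoid A)) := by
        intro m hm hmem
        have h3 : (p * u ^ m * q).length = (FreeMonoid.of a).length := by
          rw [Set.mem_singleton_iff.mp hmem]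
        rw [FreeMonoid.length_mul, FreeMonoid.length_mul, SFaux.length_pow,
          FreeMonoid.length_of] at h3
        nlinarith
      constructor
      · intro h; exact absurd h (key 2 (by omega))
      · intro h; exact absurd h (key 3 (by omega))
  | union hK hK' ihK ihK' =>
    obtain ⟨n, hn⟩ := ihK
    obtain ⟨n', hn'⟩ := ihK'
    refine ⟨max n n', fun p q u => ?_⟩
    have h1 := SFaux.P_ge hn (le_max_left n n') p q u
    have h2 := SFaux.P_ge hn' (le_max_right n n') p q u
    simp only [Set.mem_union]
    rw [h1, h2]
  | diff hK hK' ihK ihK' =>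
    obtain ⟨n, hn⟩ := ihK
    obtain ⟨n', hn'⟩ := ihK'
    refine ⟨max n n', fun p q u => ?_⟩
    have h1 := SFaux.P_ge hn (le_max_left n n') p q u
    have h2 := SFaux.P_ge hn' (le_max_right n n') p q u
    simp only [Set.mem_diff]
    rw [h1, h2]
  | concat hK hK' ihK ihK' =>
    obtain ⟨n, hn⟩ := ihK
    obtain ⟨n', hn'⟩ := ihK'
    refine ⟨n + n' + 1, fun p q u => ?_⟩
    constructor
    · exact SFaux.cat_pump hn hn' (le_refl _) (by omega) (Or.inl rfl) p q u
    · exact SFaux.cat_pump hn hn' (by omega) (le_refl _) (Or.inr rfl) p q u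
end

section
/- Let A be a finite alphabet, let K, K' ⊆ A*, and let n, m be natural numbers such that for all p, q, u ∈ A*: (p u^n q ∈ K ⇔ p u^{n+1} q ∈ K) and (p u^m q ∈ K' ⇔ p u^{m+1} q ∈ K'). Then for all p, q, u ∈ A*: p u^{n+m+1} q ∈ K · K' if and only if p u^{n+m+2} q ∈ K · K'. -/
section ApAux

variable {A : Type*}

private lemma fm_split (s t x y : FreeMonoid A) (h : s * t = x * y) :
    (∃ r, x = s * r ∧ t = r * y) ∨ (∃ r, s = x * r ∧ y = r * t) := by
  have h' : FreeMonoid.toList s ++ FreeMonoid.toList t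
      = FreeMonoid.toList x ++ FreeMonoid.toList y := by
    simpa [FreeMonoid.toList_mul] using congrArg FreeMonoid.toList h
  rcases List.append_eq_append_iff.mp h' with ⟨r, hr1, hr2⟩ | ⟨r, hr1, hr2⟩
  · left
    refine ⟨FreeMonoid.ofList r, ?_, ?_⟩
    · exact FreeMonoid.toList.injective (by simpa [FreeMonoid.toList_mul] using hr1)
    · exact FreeMonoid.toList.injective (by simpa [FreeMonoid.toList_mul] using hr2)
  · right
    refine ⟨FreeMonoid.ofList r, ?_, ?_⟩
    · exact FreeMonoid.toList.injective (by simpa [FreeMonoid.toList_mul] using hr1)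
    · exact FreeMonoid.toList.injective (by simpa [FreeMonoid.toList_mul] using hr2)

private lemma pow_split (u : FreeMonoid A) :
    ∀ (k : ℕ) (s t : FreeMonoid A), s * t = u ^ (k + 1) →
      ∃ i a b, i ≤ k ∧ a * b = u ∧ s = u ^ i * a ∧ t = b * u ^ (k - i) := by
  intro k
  induction k with
  | zero =>
    intro s t h
    exact ⟨0, s, t, le_refl 0, by simpa using h, by simp, by simp⟩
  | succ k ih =>
    intro s t h
    have h' : s * t = u * u ^ (k + 1) := by rw [h, pow_succ']
    rcases fm_split s t u (u ^ (k + 1)) h' with ⟨r, hr1, hr2⟩ | ⟨r, hr1, hr2⟩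
    · exact ⟨0, s, r, Nat.zero_le _, hr1.symm, by simp, by simp [hr2]⟩
    · obtain ⟨i, a, b, hik, hab, hs, ht⟩ := ih r t hr2.symm
      refine ⟨i + 1, a, b, by omega, hab, ?_, ?_⟩
      · rw [hr1, hs, pow_succ', mul_assoc]
      · rw [ht]; congr 2; omega

private lemma pump {K : Set (FreeMonoid A)} {n : ℕ}
    (hK : ∀ p q u : FreeMonoid A, p * u ^ n * q ∈ K ↔ p * u ^ (n + 1) * q ∈ K)
    (p q u : FreeMonoid A) (k : ℕ) (hk : n ≤ k) :
    p * u ^ k * q ∈ K ↔ p * u ^ (k + 1) * q ∈ K := by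
  obtain ⟨j, rfl⟩ := Nat.exists_eq_add_of_le hk
  have e1 : p * u ^ (n + j) * q = p * u ^ j * u ^ n * q := by
    rw [add_comm n j, pow_add, ← mul_assoc]
  have e2 : p * u ^ (n + j + 1) * q = p * u ^ j * u ^ (n + 1) * q := by
    rw [show n + j + 1 = j + (n + 1) by omega, pow_add, ← mul_assoc]
  rw [e1, e2]; exact hK (p * u ^ j) q u

end ApAux

/-- If `n` works for `K` and `m` works for `K'` (in the sense that
`p uⁿ q ∈ K ↔ p u^{n+1} q ∈ K` and similarly for `K'` with `m`), then `n + m + 1` works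
for the concatenation `K · K'`. -/
theorem cat_aperiodicity {A : Type*} [Finite A] (K K' : Set (FreeMonoid A)) (n m : ℕ)
    (hK : ∀ p q u : FreeMonoid A, p * u ^ n * q ∈ K ↔ p * u ^ (n + 1) * q ∈ K)
    (hK' : ∀ p q u : FreeMonoid A, p * u ^ m * q ∈ K' ↔ p * u ^ (m + 1) * q ∈ K') :
    ∀ p q u : FreeMonoid A,
      p * u ^ (n + m + 1) * q ∈ Lang.cat K K' ↔
      p * u ^ (n + m + 2) * q ∈ Lang.cat K K' := by
  intro p q u
  constructor
  · rintro ⟨v, hv, w, hw, hvw⟩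
    have h : v * w = p * (u ^ (n + m + 1) * q) := by rw [← hvw, mul_assoc]
    rcases fm_split v w p (u ^ (n + m + 1) * q) h with ⟨r, hr1, hr2⟩ | ⟨r, hr1, hr2⟩
    · -- p = v * r, w = r * (u^(n+m+1) * q) ; pump w
      have hw' : r * u ^ (n + m + 1) * q ∈ K' := by rw [mul_assoc, ← hr2]; exact hw
      have hw2 : r * u ^ (n + m + 2) * q ∈ K' :=
        (pump hK' r q u (n + m + 1) (by omega)).mp hw'
      exact ⟨v, hv, r * u ^ (n + m + 2) * q, hw2, by rw [hr1]; simp [mul_assoc]⟩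
    · -- v = p * r, u^(n+m+1) * q = r * w
      rcases fm_split r w (u ^ (n + m + 1)) q hr2.symm with ⟨s, hs1, hs2⟩ | ⟨s, hs1, hs2⟩
      · -- u^(n+m+1) = r * s, w = s * q : cut inside the power
        obtain ⟨i, a, b, hik, hab, hra, hsb⟩ := pow_split u (n + m) r s hs1.symm
        have hv' : p * u ^ i * a ∈ K := by
          rw [mul_assoc, ← hra, ← hr1]; exact hv
        have hw' : b * u ^ (n + m - i) * q ∈ K' := by
          rw [hs2, hsb] at hw; exact hw
        rcases le_or_gt n i with hni | hni
        · -- pump v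
          have hv2 : p * u ^ (i + 1) * a ∈ K := (pump hK p a u i hni).mp hv'
          refine ⟨p * u ^ (i + 1) * a, hv2, b * u ^ (n + m - i) * q, hw', ?_⟩
          have e : u ^ (n + m + 2) = u ^ (i + 1) * (a * b) * u ^ (n + m - i) := by
            rw [hab, ← pow_succ, ← pow_add]; congr 1; omega
          rw [e]; simp [mul_assoc]
        · -- i < n, so n + m - i ≥ m : pump w
          have hw2 : b * u ^ (n + m - i + 1) * q ∈ K' :=
            (pump hK' b q u (n + m - i) (by omega)).mp hw'
          refine ⟨p * u ^ i * a, hv', b * u ^ (n + m - i + 1) * q, hw2, ?_⟩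
          have e : u ^ (n + m + 2) = u ^ i * (a * b) * u ^ (n + m - i + 1) := by
            rw [hab, ← pow_succ, ← pow_add]; congr 1; omega
          rw [e]; simp [mul_assoc]
      · -- r = u^(n+m+1) * s, q = s * w : pump v
        have hv' : p * u ^ (n + m + 1) * s ∈ K := by
          rw [mul_assoc, ← hs1, ← hr1]; exact hv
        have hv2 : p * u ^ (n + m + 2) * s ∈ K :=
          (pump hK p s u (n + m + 1) (by omega)).mp hv'
        exact ⟨p * u ^ (n + m + 2) * s, hv2, w, hw, by rw [hs2]; simp [mul_assoc]⟩
  · rintro ⟨v, hv, w, hw, hvw⟩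
    have h : v * w = p * (u ^ (n + m + 2) * q) := by rw [← hvw, mul_assoc]
    rcases fm_split v w p (u ^ (n + m + 2) * q) h with ⟨r, hr1, hr2⟩ | ⟨r, hr1, hr2⟩
    · have hw' : r * u ^ (n + m + 2) * q ∈ K' := by rw [mul_assoc, ← hr2]; exact hw
      have hw2 : r * u ^ (n + m + 1) * q ∈ K' :=
        (pump hK' r q u (n + m + 1) (by omega)).mpr hw'
      exact ⟨v, hv, r * u ^ (n + m + 1) * q, hw2, by rw [hr1]; simp [mul_assoc]⟩
    · rcases fm_split r w (u ^ (n + m + 2)) q hr2.symm with ⟨s, hs1, hs2⟩ | ⟨s, hs1, hs2⟩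
      · obtain ⟨i, a, b, hik, hab, hra, hsb⟩ := pow_split u (n + m + 1) r s hs1.symm
        have hv' : p * u ^ i * a ∈ K := by
          rw [mul_assoc, ← hra, ← hr1]; exact hv
        have hw' : b * u ^ (n + m + 1 - i) * q ∈ K' := by
          rw [hs2, hsb] at hw; exact hw
        rcases le_or_gt (n + 1) i with hni | hni
        · -- pump v down: i ≥ n + 1
          have hv2 : p * u ^ (i - 1) * a ∈ K := by
            have := (pump hK p a u (i - 1) (by omega)).mpr
            rw [show i - 1 + 1 = i by omega] at this
            exact this hv'
          refine ⟨p * u ^ (i - 1) * a, hv2, b * u ^ (n + m + 1 - i) * q, hw', ?_⟩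
          have e : u ^ (n + m + 1) = u ^ (i - 1) * (a * b) * u ^ (n + m + 1 - i) := by
            rw [hab, ← pow_succ, ← pow_add]; congr 1; omega
          rw [e]; simp [mul_assoc]
        · -- i ≤ n, so n + m + 1 - i ≥ m + 1 : pump w down
          have hw2 : b * u ^ (n + m - i) * q ∈ K' := by
            have := (pump hK' b q u (n + m - i) (by omega)).mpr
            rw [show n + m - i + 1 = n + m + 1 - i by omega] at this
            exact this hw'
          refine ⟨p * u ^ i * a, hv', b * u ^ (n + m - i) * q, hw2, ?_⟩
          have e : u ^ (n + m + 1) = u ^ i * (a * b) * u ^ (n + m - i) := by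
            rw [hab, ← pow_succ, ← pow_add]; congr 1; omega
          rw [e]; simp [mul_assoc]
      · have hv' : p * u ^ (n + m + 2) * s ∈ K := by
          rw [mul_assoc, ← hs1, ← hr1]; exact hv
        have hv2 : p * u ^ (n + m + 1) * s ∈ K :=
          (pump hK p s u (n + m + 1) (by omega)).mpr hv'
        exact ⟨p * u ^ (n + m + 1) * s, hv2, w, hw, by rw [hs2]; simp [mul_assoc]⟩
end
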